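/- arXiv:2112.04433 — 2 statements merged into one kernel-verified Lean document; each statement's English description precedes it below -/
import Mathlib

section
/- Let s11, s12, s21, u, v, t be real numbers, each equal to 1 or -1, and let k be a natural number. Then the conjunction (s12*s21*u*v > 0 and (-s21)^(k+1)*s12^k*s11*t*v > 0) holds if and only if the conjunction (s21*s12*v*u > 0 and (-s12)^(k+1)*s21^k*s11*t*u > 0) holds. (This is the case i, j ∈ {1,3} of the comparison, in Proposition 4.3, of the real lifting conditions of a shape (C) bitangent class for the edge-length case λ1 < λ2 ≤ λ3 with those for λ2 < λ1 ≤ λ3; here u = s_{0i}, v = s_{j0}, t = s_{k,4-k}.) -/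
/-- Case `i, j ∈ {1,3}` of the comparison in Proposition 4.3: the real lifting
conditions of a shape (C) bitangent class for `λ₁ < λ₂ ≤ λ₃` are equivalent to
those for `λ₂ < λ₁ ≤ λ₃`. Here `u = s_{0i}`, `v = s_{j0}`, `t = s_{k,4-k}`,
and all quantities are signs, i.e. `±1`. -/
theorem shapeC_case_i_j_odd (s11 s12 s21 u v t : ℝ)
    (h11 : s11 = 1 ∨ s11 = -1) (h12 : s12 = 1 ∨ s12 = -1)
    (h21 : s21 = 1 ∨ s21 = -1) (hu : u = 1 ∨ u = -1)
    (hv : v = 1 ∨ v = -1) (ht : t = 1 ∨ t = -1) (k : ℕ) :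
    (s12 * s21 * u * v > 0 ∧ (-s21) ^ (k + 1) * s12 ^ k * s11 * t * v > 0) ↔
      (s21 * s12 * v * u > 0 ∧ (-s12) ^ (k + 1) * s21 ^ k * s11 * t * u > 0) := by
  have h2 : ∀ s : ℝ, (s = 1 ∨ s = -1) → ∀ m : ℕ, s ^ (2 * m) = 1 := by
    rintro s (rfl | rfl) m <;> rw [pow_mul] <;> norm_num
  have hneg : ∀ s : ℝ, (s = 1 ∨ s = -1) → (-s = 1 ∨ -s = -1) := by
    rintro s (rfl | rfl) <;> norm_num
  rcases Nat.even_or_odd k with ⟨m, hm⟩ | ⟨m, hm⟩ <;> subst hm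
  · simp only [show m + m = 2 * m from by ring, pow_succ, h2 _ h12 m, h2 _ h21 m,
      h2 _ (hneg s21 h21) m, h2 _ (hneg s12 h12) m]
    rcases h11 with rfl | rfl <;> rcases h12 with rfl | rfl <;>
      rcases h21 with rfl | rfl <;> rcases hu with rfl | rfl <;>
      rcases hv with rfl | rfl <;> rcases ht with rfl | rfl <;> norm_num
  · simp only [show 2 * m + 1 + 1 = 2 * (m + 1) from by ring, pow_succ, h2 _ h12 m,
      h2 _ h21 m, h2 _ (hneg s21 h21) (m + 1), h2 _ (hneg s12 h12) (m + 1)]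
    rcases h11 with rfl | rfl <;> rcases h12 with rfl | rfl <;>
      rcases h21 with rfl | rfl <;> rcases hu with rfl | rfl <;>
      rcases hv with rfl | rfl <;> rcases ht with rfl | rfl <;> norm_num
end

section
/- Let s02, s11, s12, s21, v, t be real numbers, each equal to 1 or -1, and let k be a natural number. Then the conjunction (-s11*s21*s02*v > 0 and (-s21)^(k+1)*s12^k*s11*t*v > 0) holds if and only if the conjunction (-s11*s21*v*s02 > 0 and (-s21*s12)^k*t*s02 > 0) holds. (This is the case j ∈ {1,3}, i = 2 of the comparison, in Proposition 4.3, of the real lifting conditions of a shape (C) bitangent class for λ1 < λ2 ≤ λ3 with those for λ2 < λ1 ≤ λ3; here v = s_{j0}, t = s_{k,4-k}.) -/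
/-- Case `j ∈ {1,3}`, `i = 2` of the comparison in Proposition 4.3: the real
lifting conditions of a shape (C) bitangent class for `λ₁ < λ₂ ≤ λ₃` are
equivalent to those for `λ₂ < λ₁ ≤ λ₃`. Here `v = s_{j0}`, `t = s_{k,4-k}`,
and all quantities are signs, i.e. `±1`. -/
theorem shapeC_case_j_odd_i_two (s02 s11 s12 s21 v t : ℝ)
    (h02 : s02 = 1 ∨ s02 = -1) (h11 : s11 = 1 ∨ s11 = -1)
    (h12 : s12 = 1 ∨ s12 = -1) (h21 : s21 = 1 ∨ s21 = -1)
    (hv : v = 1 ∨ v = -1) (ht : t = 1 ∨ t = -1) (k : ℕ) :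
    (-s11 * s21 * s02 * v > 0 ∧ (-s21) ^ (k + 1) * s12 ^ k * s11 * t * v > 0) ↔
      (-s11 * s21 * v * s02 > 0 ∧ (-s21 * s12) ^ k * t * s02 > 0) := by
  have hs02 : s02 * s02 = 1 := by rcases h02 with rfl | rfl <;> norm_num
  have key : (-s21) ^ (k + 1) * s12 ^ k * s11 * t * v
      = (-s11 * s21 * s02 * v) * ((-s21 * s12) ^ k * t * s02) := by
    linear_combination (s11 * s21 * v * t * (-s21) ^ k * s12 ^ k) * hs02
  have hA : -s11 * s21 * s02 * v = -s11 * s21 * v * s02 := by ring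
  constructor
  · rintro ⟨h1, h2⟩
    refine ⟨by linarith [hA ▸ h1], ?_⟩
    rw [key] at h2
    nlinarith [h1, h2]
  · rintro ⟨h1, h2⟩
    refine ⟨by linarith [hA ▸ h1], ?_⟩
    rw [key]
    exact mul_pos (hA ▸ h1) h2
end
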